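/- Let a, b ∈ ℤ with b ≥ a + 2 and let f, g : ℤ → ℝ. If Σ_{t=a+1}^{b} ( f(t)·η(t−1) + g(t)·(η(t) − η(t−1)) ) = 0 for every function η : ℤ → ℝ with η(a) = η(b) = 0, then g(t) − g(t−1) = f(t) for all t with a + 2 ≤ t ≤ b. -/

import Mathlib

/-- du Bois-Reymond fundamental lemma of the nabla calculus of variations on `T = ℤ`:
if `Σ_{t=a+1}^{b} ( f(t)·η(t−1) + g(t)·(∇η)(t) ) = 0` for every `η : ℤ → ℝ` with
`η(a) = η(b) = 0`, where `(∇η)(t) = η(t) − η(t−1)`, then `(∇g)(t) = f(t)` for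
`a+2 ≤ t ≤ b`. -/
theorem fundamental_lemma_duBoisReymond_int (a b : ℤ) (hab : a + 2 ≤ b) (f g : ℤ → ℝ)
    (h : ∀ η : ℤ → ℝ, η a = 0 → η b = 0 →
      ∑ t ∈ Finset.Icc (a + 1) b, (f t * η (t - 1) + g t * (η t - η (t - 1))) = 0) :
    ∀ t : ℤ, a + 2 ≤ t → t ≤ b → g t - g (t - 1) = f t := by
  intro t₀ ht₁ ht₂
  set η : ℤ → ℝ := fun s => if s = t₀ - 1 then 1 else 0 with hη
  have ha : η a = 0 := by simp [hη]; omega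
  have hb : η b = 0 := by simp [hη]; omega
  have key := h η ha hb
  have hsub : ({t₀ - 1, t₀} : Finset ℤ) ⊆ Finset.Icc (a + 1) b := by
    intro x hx
    simp only [Finset.mem_insert, Finset.mem_singleton] at hx
    rcases hx with rfl | rfl <;> simp [Finset.mem_Icc] <;> omega
  have hzero : ∀ x ∈ Finset.Icc (a + 1) b, x ∉ ({t₀ - 1, t₀} : Finset ℤ) →
      (f x * η (x - 1) + g x * (η x - η (x - 1))) = 0 := by
    intro x _ hx
    simp only [Finset.mem_insert, Finset.mem_singleton, not_or] at hx
    have h1 : η x = 0 := by simp [hη]; omega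
    have h2 : η (x - 1) = 0 := by simp [hη]; omega
    simp [h1, h2]
  rw [← Finset.sum_subset hsub hzero] at key
  have hne : (t₀ - 1 : ℤ) ≠ t₀ := by omega
  rw [Finset.sum_pair hne] at key
  have e1 : η (t₀ - 1) = 1 := by simp [hη]
  have e2 : η (t₀ - 1 - 1) = 0 := by simp [hη]
  have e3 : η t₀ = 0 := by simp [hη]; omega
  rw [e1, e2, e3] at key
  ring_nf at key ⊢
  linarith
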